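/- Let ŝ₁, …, ŝ_M be independent Gaussian random vectors in ℝ^A with ŝᵢ ~ N(sᵢ, λᵢΣᵢ). Then for any weights w_c ∈ ℝ^A, temperature τ > 0, and nonnegative coefficients p_i^c summing appropriately, the expected log-sum-exp loss E[∑_i ∑_c p_i^c log(∑_k exp(w_cᵀ(ŝᵢ − ŝ_k)/τ))] is upper bounded by ∑_i ∑_c p_i^c log(∑_k exp(w_cᵀ(sᵢ − s_k)/τ + w_cᵀ(λᵢΣᵢ + λ_kΣ_k)w_c/(2τ²))). -/

import Mathlib

open MeasureTheory ProbabilityTheory Matrix Finset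

open Real
open scoped NNReal ENNReal

def IsGaussianVec {Ω : Type*} [MeasurableSpace Ω] (μ : Measure Ω) {d : ℕ}
    (x : Ω → Fin d → ℝ) (m : Fin d → ℝ) (S : Matrix (Fin d) (Fin d) ℝ) : Prop :=
  ∀ a : Fin d → ℝ,
    μ.map (fun ω => a ⬝ᵥ x ω) = gaussianReal (a ⬝ᵥ m) (a ⬝ᵥ S.mulVec a).toNNReal

lemma exp_mul_gaussianPDFReal (m : ℝ) (v : ℝ≥0) (t x : ℝ) :
    rexp (t * x) * gaussianPDFReal m v x
      = rexp (t * m + v * t ^ 2 / 2) * gaussianPDFReal (m + v * t) v x := by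
  rcases eq_or_ne v 0 with rfl | hv
  · simp
  · have hv' : (0:ℝ) < v := by positivity
    simp only [gaussianPDFReal]
    rw [mul_left_comm, mul_left_comm (rexp _), ← Real.exp_add, ← Real.exp_add]
    congr 1
    field_simp
    ring

lemma integrable_exp_mul_gaussianReal (m : ℝ) (v : ℝ≥0) (t : ℝ) :
    Integrable (fun x => rexp (t * x)) (gaussianReal m v) := by
  rcases eq_or_ne v 0 with rfl | hv
  · rw [gaussianReal_zero_var]
    exact (integrable_const _).congr (ae_eq_dirac (fun x => rexp (t*x))).symm
  · rw [gaussianReal_of_var_ne_zero _ hv]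
    have : (gaussianPDF m v) = fun x => ((Real.toNNReal (gaussianPDFReal m v x)) : ℝ≥0∞) := rfl
    rw [this, integrable_withDensity_iff_integrable_smul
      ((measurable_gaussianPDFReal m v).real_toNNReal)]
    have heq : (fun x => (Real.toNNReal (gaussianPDFReal m v x)) • rexp (t * x))
        = fun x => rexp (t * m + v * t ^ 2 / 2) * gaussianPDFReal (m + v * t) v x := by
      ext x
      rw [NNReal.smul_def, smul_eq_mul, Real.coe_toNNReal _ (gaussianPDFReal_nonneg m v x),
        mul_comm, exp_mul_gaussianPDFReal]
    rw [heq]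
    exact (integrable_gaussianPDFReal _ _).const_mul _

lemma integral_exp_mul_gaussianReal (m : ℝ) (v : ℝ≥0) (t : ℝ) :
    ∫ x, rexp (t * x) ∂(gaussianReal m v) = rexp (t * m + v * t ^ 2 / 2) := by
  rcases eq_or_ne v 0 with rfl | hv
  · simp [gaussianReal_zero_var, integral_dirac]
  · rw [gaussianReal_of_var_ne_zero _ hv]
    have h0 : (gaussianPDF m v) = fun x => ((Real.toNNReal (gaussianPDFReal m v x)) : ℝ≥0∞) := rfl
    rw [h0, integral_withDensity_eq_integral_smul
      ((measurable_gaussianPDFReal m v).real_toNNReal)]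
    have heq : (fun x => (Real.toNNReal (gaussianPDFReal m v x)) • rexp (t * x))
        = fun x => rexp (t * m + v * t ^ 2 / 2) * gaussianPDFReal (m + v * t) v x := by
      ext x
      rw [NNReal.smul_def, smul_eq_mul, Real.coe_toNNReal _ (gaussianPDFReal_nonneg m v x),
        mul_comm, exp_mul_gaussianPDFReal]
    rw [heq, integral_const_mul, integral_gaussianPDFReal_eq_one _ hv, mul_one]

lemma aemeasurable_of_map_gaussianReal {Ω : Type*} [MeasurableSpace Ω] {μ : Measure Ω}
    {X : Ω → ℝ} {m : ℝ} {v : ℝ≥0} (h : μ.map X = gaussianReal m v) :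
    AEMeasurable X μ := by
  by_contra hc
  rw [Measure.map_of_not_aemeasurable hc] at h
  have h1 : (gaussianReal m v) Set.univ = 1 := measure_univ
  rw [← h] at h1
  simp at h1

lemma integrable_exp_comp {Ω : Type*} [MeasurableSpace Ω] {μ : Measure Ω}
    {X : Ω → ℝ} {m : ℝ} {v : ℝ≥0} (h : μ.map X = gaussianReal m v) (t : ℝ) :
    Integrable (fun ω => rexp (t * X ω)) μ := by
  have hae := aemeasurable_of_map_gaussianReal h
  have h2 : Integrable (fun x => rexp (t * x)) (μ.map X) := by
    rw [h]; exact integrable_exp_mul_gaussianReal m v t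
  have hm : Measurable (fun x : ℝ => rexp (t * x)) := by fun_prop
  rwa [integrable_map_measure hm.aestronglyMeasurable hae] at h2

lemma integral_exp_comp {Ω : Type*} [MeasurableSpace Ω] {μ : Measure Ω}
    {X : Ω → ℝ} {m : ℝ} {v : ℝ≥0} (h : μ.map X = gaussianReal m v) (t : ℝ) :
    ∫ ω, rexp (t * X ω) ∂μ = rexp (t * m + v * t ^ 2 / 2) := by
  have hae := aemeasurable_of_map_gaussianReal h
  have hm : Measurable (fun x : ℝ => rexp (t * x)) := by fun_prop
  rw [← integral_exp_mul_gaussianReal m v t, ← h, integral_map hae hm.aestronglyMeasurable]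

lemma fakd_core {Ω : Type*} [MeasurableSpace Ω] (μ : Measure Ω) [IsProbabilityMeasure μ]
    {M : ℕ} (X : Fin M → Ω → ℝ) (m : Fin M → ℝ) (q : Fin M → ℝ) (hq : ∀ j, 0 ≤ q j)
    (hlaw : ∀ j, μ.map (X j) = gaussianReal (m j) (q j).toNNReal)
    (hind : ∀ i k, i ≠ k → IndepFun (X i) (X k) μ)
    {τ : ℝ} (hτ : 0 < τ) (i : Fin M) :
    Integrable (fun ω => Real.log (∑ k, rexp ((X i ω - X k ω) / τ))) μ ∧
    ∫ ω, Real.log (∑ k, rexp ((X i ω - X k ω) / τ)) ∂μ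
      ≤ Real.log (∑ k, rexp ((m i - m k) / τ + (q i + q k) / (2 * τ ^ 2))) := by
  have hτ' : τ ≠ 0 := hτ.ne'
  set t : ℝ := τ⁻¹ with ht
  set f : Fin M → Ω → ℝ := fun k ω => rexp ((X i ω - X k ω) / τ) with hf
  set Z : Ω → ℝ := fun ω => ∑ k, f k ω with hZ
  have hcoe : ∀ j, ((q j).toNNReal : ℝ) = q j := fun j => Real.coe_toNNReal _ (hq j)
  have harith : ∀ a b : ℝ, (a - b) / τ = t * a + -t * b := by
    intro a b; rw [ht]; field_simp; ring
  have hfsplit : ∀ k ω, f k ω = rexp (t * X i ω) * rexp (-t * X k ω) := by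
    intro k ω
    rw [hf]; dsimp only; rw [harith, Real.exp_add]
  have hfi : ∀ ω, f i ω = 1 := by
    intro ω
    show rexp ((X i ω - X i ω) / τ) = 1
    rw [sub_self, zero_div, Real.exp_zero]
  have hm1 : Measurable (fun x : ℝ => rexp (t * x)) := by fun_prop
  have hm2 : Measurable (fun x : ℝ => rexp (-t * x)) := by fun_prop
  have hfint : ∀ k, Integrable (f k) μ := by
    intro k
    rcases eq_or_ne k i with rfl | hk
    · exact (integrable_const 1).congr (ae_of_all _ fun ω => (hfi ω).symm)
    · have hsplit : f k = fun ω => rexp (t * X i ω) * rexp (-t * X k ω) :=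
        funext fun ω => hfsplit k ω
      rw [hsplit]
      exact ((hind i k (Ne.symm hk)).comp hm1 hm2).integrable_mul
        (integrable_exp_comp (hlaw i) t) (integrable_exp_comp (hlaw k) (-t))
  have hEf : ∀ k, k ≠ i →
      ∫ ω, f k ω ∂μ = rexp ((m i - m k) / τ + (q i + q k) / (2 * τ ^ 2)) := by
    intro k hk
    have hsplit : f k = fun ω => rexp (t * X i ω) * rexp (-t * X k ω) :=
      funext fun ω => hfsplit k ω
    have hmul := ((hind i k (Ne.symm hk)).comp hm1 hm2).integral_fun_mul_eq_mul_integral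
        (integrable_exp_comp (hlaw i) t).aestronglyMeasurable
        (integrable_exp_comp (hlaw k) (-t)).aestronglyMeasurable
    rw [hsplit]
    have : (∫ ω, rexp (t * X i ω) * rexp (-t * X k ω) ∂μ)
        = (∫ ω, rexp (t * X i ω) ∂μ) * ∫ ω, rexp (-t * X k ω) ∂μ := hmul
    rw [this, integral_exp_comp (hlaw i) t, integral_exp_comp (hlaw k) (-t), ← Real.exp_add]
    congr 1
    rw [hcoe, hcoe]
    simp only [ht]
    field_simp
    ring
  have hZpos : ∀ ω, 0 < Z ω := by
    intro ω
    exact Finset.sum_pos (fun k _ => Real.exp_pos _) ⟨i, mem_univ i⟩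
  have hZ1 : ∀ ω, 1 ≤ Z ω := by
    intro ω
    calc (1:ℝ) = f i ω := (hfi ω).symm
    _ ≤ Z ω := Finset.single_le_sum (f := fun k => f k ω) (fun k _ => (Real.exp_pos _).le) (mem_univ i)
  have hZint : Integrable Z μ := integrable_finset_sum _ (fun k _ => hfint k)
  set B : ℝ := ∑ k, rexp ((m i - m k) / τ + (q i + q k) / (2 * τ ^ 2)) with hB
  have hIB : ∫ ω, Z ω ∂μ ≤ B := by
    rw [hZ, integral_finset_sum _ (fun k _ => hfint k)]
    refine Finset.sum_le_sum fun k _ => ?_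
    rcases eq_or_ne k i with rfl | hk
    · have : ∫ ω, f k ω ∂μ = 1 := by
        rw [show (fun ω => f k ω) = fun _ => (1:ℝ) from funext hfi]
        simp
      rw [this]
      refine Real.one_le_exp ?_
      have : (m k - m k) / τ = 0 := by simp
      rw [this, zero_add]
      have h1 := hq k
      positivity
    · exact (hEf k hk).le
  set I : ℝ := ∫ ω, Z ω ∂μ with hI
  have hI1 : 1 ≤ I := by
    calc (1:ℝ) = ∫ _, (1:ℝ) ∂μ := by simp
    _ ≤ I := integral_mono (integrable_const 1) hZint hZ1
  have hIpos : (0:ℝ) < I := lt_of_lt_of_le one_pos hI1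
  have hXae : ∀ j, AEMeasurable (X j) μ := fun j => aemeasurable_of_map_gaussianReal (hlaw j)
  have hZae : AEMeasurable Z μ := by
    refine Finset.aemeasurable_fun_sum _ fun k _ => ?_
    exact Real.measurable_exp.comp_aemeasurable (((hXae i).sub (hXae k)).div_const τ)
  have hlogint : Integrable (fun ω => Real.log (Z ω)) μ := by
    refine hZint.mono (Real.measurable_log.comp_aemeasurable hZae).aestronglyMeasurable
      (ae_of_all _ fun ω => ?_)
    rw [Real.norm_eq_abs, Real.norm_eq_abs, abs_of_nonneg (Real.log_nonneg (hZ1 ω)),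
      abs_of_pos (hZpos ω)]
    have := Real.log_le_sub_one_of_pos (hZpos ω)
    linarith
  constructor
  · exact hlogint
  · have hpt : ∀ ω, Real.log (Z ω) ≤ Z ω / I + (Real.log I - 1) := by
      intro ω
      have h1 := Real.log_le_sub_one_of_pos (div_pos (hZpos ω) hIpos)
      rw [Real.log_div (hZpos ω).ne' hIpos.ne'] at h1
      linarith
    calc ∫ ω, Real.log (Z ω) ∂μ
        ≤ ∫ ω, (Z ω / I + (Real.log I - 1)) ∂μ :=
          integral_mono hlogint ((hZint.div_const I).add (integrable_const _)) hpt
      _ = I / I + (Real.log I - 1) := by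
          rw [integral_add (hZint.div_const I) (integrable_const _), integral_div]
          simp
          rfl
      _ = Real.log I := by rw [div_self hIpos.ne']; ring
      _ ≤ Real.log B := Real.log_le_log hIpos hIB


/-- Theorem 1 of the FAKD paper: the expected log-sum-exp distillation loss over
independent Gaussian feature augmentations is upper bounded by the empirical
surrogate loss. -/
theorem fakd_upper_bound {Ω : Type*} [MeasurableSpace Ω] (μ : Measure Ω)
    [IsProbabilityMeasure μ] {A M C : ℕ}
    (shat : Fin M → Ω → Fin A → ℝ) (s : Fin M → Fin A → ℝ)
    (lam : Fin M → ℝ) (hlam : ∀ i, 0 ≤ lam i)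
    (Sig : Fin M → Matrix (Fin A) (Fin A) ℝ) (hSig : ∀ i, (Sig i).PosSemidef)
    (hgauss : ∀ i, IsGaussianVec μ (shat i) (s i) (lam i • Sig i))
    (hindep : iIndepFun shat μ)
    (w : Fin C → Fin A → ℝ) (τ : ℝ) (hτ : 0 < τ)
    (p : Fin M → Fin C → ℝ) (hp : ∀ i c, 0 ≤ p i c) :
    ∫ ω, ∑ i : Fin M, ∑ c : Fin C, p i c *
        Real.log (∑ k : Fin M, Real.exp (w c ⬝ᵥ (shat i ω - shat k ω) / τ)) ∂μ
      ≤ ∑ i : Fin M, ∑ c : Fin C, p i c *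
          Real.log (∑ k : Fin M, Real.exp (w c ⬝ᵥ (s i - s k) / τ
            + w c ⬝ᵥ (lam i • Sig i + lam k • Sig k).mulVec (w c) / (2 * τ ^ 2))) := by
  have mdot : ∀ c, Measurable (fun v : Fin A → ℝ => w c ⬝ᵥ v) := by
    intro c
    simp only [dotProduct]
    exact Finset.measurable_sum _ fun j _ => ((measurable_pi_apply j).const_mul _)
  have hq : ∀ c j, 0 ≤ w c ⬝ᵥ (lam j • Sig j).mulVec (w c) := by
    intro c j
    rw [Matrix.smul_mulVec, dotProduct_smul]
    have h2 := (hSig j).dotProduct_mulVec_nonneg (w c)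
    rw [star_trivial] at h2
    exact smul_nonneg (hlam j) h2
  have key : ∀ i c,
      Integrable (fun ω => Real.log (∑ k, rexp (((w c ⬝ᵥ shat i ω) - (w c ⬝ᵥ shat k ω)) / τ))) μ ∧
      ∫ ω, Real.log (∑ k, rexp (((w c ⬝ᵥ shat i ω) - (w c ⬝ᵥ shat k ω)) / τ)) ∂μ
        ≤ Real.log (∑ k, rexp (((w c ⬝ᵥ s i) - (w c ⬝ᵥ s k)) / τ
            + ((w c ⬝ᵥ (lam i • Sig i).mulVec (w c)) + (w c ⬝ᵥ (lam k • Sig k).mulVec (w c)))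
              / (2 * τ ^ 2))) := by
    intro i c
    exact fakd_core μ (fun j ω => w c ⬝ᵥ shat j ω) (fun j => w c ⬝ᵥ s j)
      (fun j => w c ⬝ᵥ (lam j • Sig j).mulVec (w c)) (hq c)
      (fun j => hgauss j (w c))
      (fun i k hik => (hindep.indepFun hik).comp (mdot c) (mdot c)) hτ i
  simp only [dotProduct_sub, Matrix.add_mulVec, dotProduct_add]
  rw [integral_finset_sum _ fun i _ => integrable_finset_sum _ fun c _ =>
    ((key i c).1.const_mul (p i c))]
  refine Finset.sum_le_sum fun i _ => ?_
  rw [integral_finset_sum _ fun c _ => ((key i c).1.const_mul (p i c))]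
  refine Finset.sum_le_sum fun c _ => ?_
  rw [integral_const_mul]
  exact mul_le_mul_of_nonneg_left (key i c).2 (hp i c)
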